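/- Let H be a cocommutative bialgebra over a commutative ring R, F a Drinfel'd twist on H with R-matrix ℛ := F₂₁ · F⁻¹ and ℛ⁻¹ = τ(ℛ) = Σ_k R_k ⊗ R^k, let L be a Lie algebra in H-modules with twisted bracket [x, y]_⋆ := Σ_k ⁅f̄^k(x), f̄_k(y)⁆, and let M be an L-module in H-modules with twisted action x ⋆ m := Σ_k f̄^k(x) · f̄_k(m). Then the twisted action is a braided representation of the braided Lie algebra (L, [·,·]_⋆): for all x, y ∈ L and m ∈ M, x ⋆ (y ⋆ m) − Σ_k R_k(y) ⋆ (R^k(x) ⋆ m) = [x, y]_⋆ ⋆ m. -/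

import Mathlib

open scoped TensorProduct

noncomputable section

/-- `Δ ⊗ id` as an algebra homomorphism `H ⊗ H → (H ⊗ H) ⊗ H`. -/
def comulTensorId (R H : Type*) [CommRing R] [Ring H] [Bialgebra R H] :
    (H ⊗[R] H) →ₐ[R] (H ⊗[R] H) ⊗[R] H :=
  Algebra.TensorProduct.map (Bialgebra.comulAlgHom R H) (AlgHom.id R H)

/-- `id ⊗ Δ` as an algebra homomorphism `H ⊗ H → H ⊗ (H ⊗ H)`. -/
def idTensorComul (R H : Type*) [CommRing R] [Ring H] [Bialgebra R H] :
    (H ⊗[R] H) →ₐ[R] H ⊗[R] (H ⊗[R] H) :=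
  Algebra.TensorProduct.map (AlgHom.id R H) (Bialgebra.comulAlgHom R H)

/-- `F` is a Drinfel'd twist on the bialgebra `H` with two-sided inverse `Finv`:
it is invertible and satisfies the 2-cocycle condition
`(F ⊗ 1) · (Δ ⊗ id)(F) = (1 ⊗ F) · (id ⊗ Δ)(F)` in `H ⊗ H ⊗ H`. -/
def IsDrinfeldTwist (R : Type*) {H : Type*} [CommRing R] [Ring H] [Bialgebra R H]
    (F Finv : H ⊗[R] H) : Prop :=
  F * Finv = 1 ∧ Finv * F = 1 ∧
    (TensorProduct.assoc R H H H) ((F ⊗ₜ[R] (1 : H)) * comulTensorId R H F) =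
      ((1 : H) ⊗ₜ[R] F) * idTensorComul R H F

/-- The `R`-matrix `ℛ := F₂₁ · F⁻¹` associated to a Drinfel'd twist, where
`F₂₁ = τ(F)` and `τ` is the flip of `H ⊗ H`. -/
def Rmat (R : Type*) {H : Type*} [CommRing R] [Ring H] [Bialgebra R H]
    (F Finv : H ⊗[R] H) : H ⊗[R] H :=
  (Algebra.TensorProduct.comm R H H) F * Finv

/-- The bialgebra `H` is cocommutative: `τ ∘ Δ = Δ`. -/
def IsCocommutative (R : Type*) (H : Type*) [CommRing R] [Ring H] [Bialgebra R H] : Prop :=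
  ∀ x : H, (Algebra.TensorProduct.comm R H H) (Coalgebra.comul (R := R) x) =
    Coalgebra.comul (R := R) x

/-- The action of an element of `H ⊗ H` on `M ⊗ N`, acting with the first leg on `M`
and the second leg on `N` through the given representations. -/
def legAct {R H : Type*} [CommRing R] [Ring H] [Algebra R H]
    {M N : Type*} [AddCommGroup M] [Module R M] [AddCommGroup N] [Module R N]
    (ρM : H →ₐ[R] Module.End R M) (ρN : H →ₐ[R] Module.End R N) :
    H ⊗[R] H →ₗ[R] (M ⊗[R] N →ₗ[R] M ⊗[R] N) :=
  (TensorProduct.homTensorHomMap (RingHom.id R) M N M N).comp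
    (TensorProduct.map ρM.toLinearMap ρN.toLinearMap)

/-- The Lie bracket of `L` as an `R`-bilinear map. -/
def lieBil (R L : Type*) [CommRing R] [LieRing L] [LieAlgebra R L] :
    L →ₗ[R] L →ₗ[R] L :=
  LinearMap.mk₂ R (fun x y => ⁅x, y⁆) add_lie smul_lie lie_add lie_smul

/-- `ρ` makes the `R`-Lie algebra `L` into a Lie algebra in `H`-modules:
`ρ(h)⁅x, y⁆ = Σ ⁅ρ(h₍₁₎)(x), ρ(h₍₂₎)(y)⁆`. -/
def IsHLieAlgebra (R : Type*) {H L : Type*} [CommRing R] [Ring H] [Bialgebra R H]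
    [LieRing L] [LieAlgebra R L] (ρ : H →ₐ[R] Module.End R L) : Prop :=
  ∀ (h : H) (x y : L),
    ρ h ⁅x, y⁆ =
      TensorProduct.lift (lieBil R L)
        (legAct ρ ρ (Coalgebra.comul (R := R) h) (x ⊗ₜ[R] y))

/-- The twisted bracket `[x, y]_⋆ := Σ ⁅f̄ᵏ(x), f̄ₖ(y)⁆`, as a linear map on `L ⊗ L`. -/
def starBracket {R H L : Type*} [CommRing R] [Ring H] [Bialgebra R H]
    [LieRing L] [LieAlgebra R L] (ρ : H →ₐ[R] Module.End R L) (Finv : H ⊗[R] H) :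
    L ⊗[R] L →ₗ[R] L :=
  (TensorProduct.lift (lieBil R L)).comp (legAct ρ ρ Finv)

/-- The twisted action `x ⋆ m := Σ f̄ᵏ(x) · f̄ₖ(m)`, as a linear map on `L ⊗ M`. -/
def starAction {R H L M : Type*} [CommRing R] [Ring H] [Bialgebra R H]
    [LieRing L] [LieAlgebra R L] [AddCommGroup M] [Module R M]
    (ρL : H →ₐ[R] Module.End R L) (ρM : H →ₐ[R] Module.End R M)
    (β : L →ₗ[R] M →ₗ[R] M) (Finv : H ⊗[R] H) : L ⊗[R] M →ₗ[R] M :=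
  (TensorProduct.lift β).comp (legAct ρL ρM Finv)


section AuxPairAct

/-- The action of `A ⊗ B` on `M ⊗ N` through two representations, as an algebra
homomorphism. -/
def pairAct {R A B M N : Type*} [CommRing R] [Ring A] [Algebra R A] [Ring B] [Algebra R B]
    [AddCommGroup M] [Module R M] [AddCommGroup N] [Module R N]
    (ρ1 : A →ₐ[R] Module.End R M) (ρ2 : B →ₐ[R] Module.End R N) :
    A ⊗[R] B →ₐ[R] Module.End R (M ⊗[R] N) :=
  (Module.endTensorEndAlgHom (R := R) (S := R) (A := R) (M := M) (N := N)).comp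
    (Algebra.TensorProduct.map ρ1 ρ2)

theorem pairAct_tmul_apply {R A B M N : Type*} [CommRing R] [Ring A] [Algebra R A]
    [Ring B] [Algebra R B]
    [AddCommGroup M] [Module R M] [AddCommGroup N] [Module R N]
    (ρ1 : A →ₐ[R] Module.End R M) (ρ2 : B →ₐ[R] Module.End R N)
    (a : A) (b : B) (x : M) (n : N) :
    pairAct ρ1 ρ2 (a ⊗ₜ[R] b) (x ⊗ₜ[R] n) = (ρ1 a x) ⊗ₜ[R] (ρ2 b n) := rfl

theorem legAct_eq_pairAct {R H : Type*} [CommRing R] [Ring H] [Algebra R H]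
    {M N : Type*} [AddCommGroup M] [Module R M] [AddCommGroup N] [Module R N]
    (ρM : H →ₐ[R] Module.End R M) (ρN : H →ₐ[R] Module.End R N) (z : H ⊗[R] H) :
    legAct ρM ρN z = pairAct ρM ρN z := by
  induction z using TensorProduct.induction_on with
  | zero => simp [legAct]
  | tmul a b =>
      apply TensorProduct.ext'
      intro x n
      simp [legAct, pairAct_tmul_apply]
  | add u v hu hv => simp [map_add, hu, hv]

theorem starAction_eq {R H L M : Type*} [CommRing R] [Ring H] [Bialgebra R H]
    [LieRing L] [LieAlgebra R L] [AddCommGroup M] [Module R M]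
    (ρL : H →ₐ[R] Module.End R L) (ρM : H →ₐ[R] Module.End R M)
    (β : L →ₗ[R] M →ₗ[R] M) (ξ : H ⊗[R] H) :
    starAction ρL ρM β ξ = (TensorProduct.lift β).comp (pairAct ρL ρM ξ) := by
  rw [starAction, legAct_eq_pairAct]

theorem starBracket_eq {R H L : Type*} [CommRing R] [Ring H] [Bialgebra R H]
    [LieRing L] [LieAlgebra R L]
    (ρ : H →ₐ[R] Module.End R L) (ξ : H ⊗[R] H) :
    starBracket ρ ξ = (TensorProduct.lift (lieBil R L)).comp (pairAct ρ ρ ξ) := by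
  rw [starBracket, legAct_eq_pairAct]

theorem comm_comm_apply {R H : Type*} [CommRing R] [Ring H] [Algebra R H] (z : H ⊗[R] H) :
    (Algebra.TensorProduct.comm R H H) ((Algebra.TensorProduct.comm R H H) z) = z := by
  induction z using TensorProduct.induction_on with
  | zero => simp
  | tmul a b => simp
  | add u v hu hv => simp [map_add, hu, hv]

end AuxPairAct

set_option maxHeartbeats 2000000

/-- For a Drinfel'd twist on a cocommutative bialgebra `H`, a Lie
algebra `L` in `H`-modules, and an `L`-module `M` in `H`-modules, the twisted action is
a braided representation of the braided Lie algebra `(L, [·,·]_⋆)`: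
`x ⋆ (y ⋆ m) − Σ_k R_k(y) ⋆ (R^k(x) ⋆ m) = [x, y]_⋆ ⋆ m`,
where `ℛ⁻¹ = τ(ℛ) = Σ_k R_k ⊗ R^k`. -/
theorem starAction_braided_representation
    (R : Type*) [CommRing R] (H : Type*) [Ring H] [Bialgebra R H]
    (hcc : IsCocommutative R H)
    (L : Type*) [LieRing L] [LieAlgebra R L]
    (ρL : H →ₐ[R] Module.End R L) (hL : IsHLieAlgebra R ρL)
    (M : Type*) [AddCommGroup M] [Module R M]
    (ρM : H →ₐ[R] Module.End R M)
    (β : L →ₗ[R] M →ₗ[R] M)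
    (hβlie : ∀ (x y : L) (m : M), β ⁅x, y⁆ m = β x (β y m) - β y (β x m))
    (hβH : ∀ (h : H) (x : L) (m : M),
      ρM h (β x m) =
        TensorProduct.lift β (legAct ρL ρM (Coalgebra.comul (R := R) h) (x ⊗ₜ[R] m)))
    (F Finv : H ⊗[R] H) (hF : IsDrinfeldTwist R F Finv) :
    ∀ (x y : L) (m : M),
      starAction ρL ρM β Finv (x ⊗ₜ[R] (starAction ρL ρM β Finv (y ⊗ₜ[R] m))) -
          ((starAction ρL ρM β Finv).comp
              (TensorProduct.map LinearMap.id (starAction ρL ρM β Finv)))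
            ((TensorProduct.assoc R L L M)
              ((legAct ρL ρL ((Algebra.TensorProduct.comm R H H) (Rmat R F Finv))
                  (y ⊗ₜ[R] x)) ⊗ₜ[R] m)) =
        starAction ρL ρM β Finv ((starBracket ρL Finv (x ⊗ₜ[R] y)) ⊗ₜ[R] m) := by
  classical
  intro x y m
  obtain ⟨hF1, hF2, hF3⟩ := hF
  -- abbreviations (as plain definitions for readability)
  set σ : H ⊗[R] H →ₐ[R] Module.End R (L ⊗[R] M) := pairAct ρL ρM with hσdef
  set σLL : H ⊗[R] H →ₐ[R] Module.End R (L ⊗[R] L) := pairAct ρL ρL with hσLLdef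
  set T : H ⊗[R] (H ⊗[R] H) →ₐ[R] Module.End R (L ⊗[R] (L ⊗[R] M)) := pairAct ρL σ with hTdef
  set T' : (H ⊗[R] H) ⊗[R] H →ₐ[R] Module.End R ((L ⊗[R] L) ⊗[R] M) := pairAct σLL ρM
    with hT'def
  set B2 : L ⊗[R] (L ⊗[R] M) →ₗ[R] M :=
    (TensorProduct.lift β).comp (TensorProduct.map LinearMap.id (TensorProduct.lift β))
    with hB2def
  set B2' : (L ⊗[R] L) ⊗[R] M →ₗ[R] M :=
    (TensorProduct.lift β).comp
      (TensorProduct.map (TensorProduct.lift (lieBil R L)) LinearMap.id) with hB2'def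
  set aH := Algebra.TensorProduct.assoc R R R H H H with haHdef
  set swH : (H ⊗[R] H) ⊗[R] H →ₐ[R] (H ⊗[R] H) ⊗[R] H :=
    Algebra.TensorProduct.map (Algebra.TensorProduct.comm R H H).toAlgHom (AlgHom.id R H)
    with hswHdef
  have hswH_tmul : ∀ (p : H ⊗[R] H) (c : H),
      swH (p ⊗ₜ[R] c) = (Algebra.TensorProduct.comm R H H p) ⊗ₜ[R] c := by
    intro p c; simp [hswHdef]
  have hsa_add : ∀ u v : H ⊗[R] H, starAction ρL ρM β (u + v)
      = starAction ρL ρM β u + starAction ρL ρM β v := by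
    intro u v
    simp only [starAction_eq, map_add]
    ext t
    simp
  have hsa_zero : starAction ρL ρM β (0 : H ⊗[R] H) = 0 := by
    simp only [starAction_eq, map_zero]
    ext t
    simp
  have hsb_add : ∀ u v : H ⊗[R] H, starBracket ρL (u + v)
      = starBracket ρL u + starBracket ρL v := by
    intro u v
    simp only [starBracket_eq, map_add]
    ext t
    simp
  have hsb_zero : starBracket ρL (0 : H ⊗[R] H) = 0 := by
    simp only [starBracket_eq, map_zero]
    ext t
    simp
  -- O1 : operator form of the doubly-twisted action
  have O1 : ∀ ξ η : H ⊗[R] H,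
      (starAction ρL ρM β ξ).comp
          (TensorProduct.map LinearMap.id (starAction ρL ρM β η)) =
        B2.comp (T (idTensorComul R H ξ * ((1 : H) ⊗ₜ[R] η)) : _ →ₗ[R] _) := by
    intro ξ η
    induction ξ using TensorProduct.induction_on with
    | zero =>
        simp only [hsa_zero, map_zero, zero_mul]
        ext t; simp
    | add u v hu hv =>
        rw [hsa_add, LinearMap.add_comp, hu, hv, map_add, add_mul, map_add]
        ext t; simp
    | tmul a b =>
        induction η using TensorProduct.induction_on with
        | zero =>
            rw [hsa_zero]
            have h0 : TensorProduct.map (LinearMap.id (R := R) (M := L))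
                (0 : L ⊗[R] M →ₗ[R] M) = 0 := by
              apply TensorProduct.ext'; intro u s; simp
            rw [h0, LinearMap.comp_zero, TensorProduct.tmul_zero, mul_zero, map_zero]
            ext t; simp
        | add u v hu hv =>
            rw [hsa_add, TensorProduct.map_add_right, LinearMap.comp_add, hu, hv,
              TensorProduct.tmul_add, mul_add, map_add]
            ext t; simp
        | tmul c d =>
            apply TensorProduct.ext'
            intro x' t
            induction t using TensorProduct.induction_on with
            | zero => simp
            | add s s' hs hs' =>
                simp only [TensorProduct.tmul_add, map_add, hs, hs']
            | tmul y' m' =>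
                have key := hβH b (ρL c y') (ρM d m')
                rw [legAct_eq_pairAct] at key
                simp only [LinearMap.comp_apply, TensorProduct.map_tmul,
                  LinearMap.id_apply, starAction_eq, LinearMap.comp_apply,
                  pairAct_tmul_apply, TensorProduct.lift.tmul]
                rw [key]
                have hstep : (pairAct ρL ρM (Coalgebra.comul (R := R) b))
                      ((ρL c y') ⊗ₜ[R] (ρM d m')) =
                    (pairAct ρL ρM (Coalgebra.comul (R := R) b * (c ⊗ₜ[R] d)))
                      (y' ⊗ₜ[R] m') := by
                  rw [map_mul]; rfl
                rw [hstep]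
                have hmul : (idTensorComul R H (a ⊗ₜ[R] b)) * ((1 : H) ⊗ₜ[R] (c ⊗ₜ[R] d)) =
                    (a * 1) ⊗ₜ[R] (Coalgebra.comul (R := R) b * (c ⊗ₜ[R] d)) := by
                  simp [idTensorComul, Algebra.TensorProduct.map_tmul,
                    Algebra.TensorProduct.tmul_mul_tmul, Bialgebra.comulAlgHom_apply]
                rw [hmul]
                simp [hTdef, pairAct_tmul_apply, hB2def, hσdef, mul_one]
  -- O2 : the twisted action applied to the twisted bracket
  have O2 : ∀ ξ η : H ⊗[R] H,
      starAction ρL ρM β ξ ((starBracket ρL η (x ⊗ₜ[R] y)) ⊗ₜ[R] m) =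
        B2' (T' (comulTensorId R H ξ * (η ⊗ₜ[R] (1 : H))) ((x ⊗ₜ[R] y) ⊗ₜ[R] m)) := by
    intro ξ η
    induction ξ using TensorProduct.induction_on with
    | zero => simp [hsa_zero, map_zero, zero_mul]
    | add u v hu hv =>
        rw [hsa_add, map_add, add_mul, map_add]
        simp only [LinearMap.add_apply, map_add, hu, hv]
    | tmul a b =>
        induction η using TensorProduct.induction_on with
        | zero =>
            rw [hsb_zero]
            simp only [LinearMap.zero_apply, TensorProduct.zero_tmul, map_zero, mul_zero]
        | add u v hu hv =>
            rw [hsb_add]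
            simp only [LinearMap.add_apply, TensorProduct.add_tmul, map_add,
              mul_add, hu, hv]
        | tmul c d =>
            have hbr : starBracket ρL (c ⊗ₜ[R] d) (x ⊗ₜ[R] y) = ⁅ρL c x, ρL d y⁆ := by
              rw [starBracket_eq]
              simp [pairAct_tmul_apply, lieBil]
            rw [hbr, starAction_eq]
            simp only [LinearMap.comp_apply, pairAct_tmul_apply, TensorProduct.lift.tmul]
            have key := hL a (ρL c x) (ρL d y)
            rw [legAct_eq_pairAct] at key
            rw [key]
            have hstep : (pairAct ρL ρL (Coalgebra.comul (R := R) a))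
                  ((ρL c x) ⊗ₜ[R] (ρL d y)) =
                (pairAct ρL ρL (Coalgebra.comul (R := R) a * (c ⊗ₜ[R] d)))
                  (x ⊗ₜ[R] y) := by
              rw [map_mul]; rfl
            rw [hstep]
            have hmul : (comulTensorId R H (a ⊗ₜ[R] b)) * ((c ⊗ₜ[R] d) ⊗ₜ[R] (1 : H)) =
                (Coalgebra.comul (R := R) a * (c ⊗ₜ[R] d)) ⊗ₜ[R] (b * 1) := by
              simp [comulTensorId, Algebra.TensorProduct.map_tmul,
                Algebra.TensorProduct.tmul_mul_tmul, Bialgebra.comulAlgHom_apply]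
            rw [hmul]
            simp [hT'def, pairAct_tmul_apply, hB2'def, hσLLdef, mul_one]
  -- O3 : expanding the Lie bracket via hβlie
  have O3 : ∀ ζ : (H ⊗[R] H) ⊗[R] H,
      B2' (T' ζ ((x ⊗ₜ[R] y) ⊗ₜ[R] m)) =
        B2 (T (aH ζ) (x ⊗ₜ[R] (y ⊗ₜ[R] m))) -
          B2 (T (aH (swH ζ)) (y ⊗ₜ[R] (x ⊗ₜ[R] m))) := by
    intro ζ
    induction ζ using TensorProduct.induction_on with
    | zero => simp
    | add u v hu hv =>
        simp only [map_add, LinearMap.add_apply, hu, hv]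
        abel
    | tmul p c =>
        induction p using TensorProduct.induction_on with
        | zero =>
            rw [TensorProduct.zero_tmul]
            simp
        | add p1 p2 h1 h2 =>
            rw [TensorProduct.add_tmul]
            simp only [map_add, LinearMap.add_apply, h1, h2]
            abel
        | tmul a b =>
            have hassoc : aH ((a ⊗ₜ[R] b) ⊗ₜ[R] c) = a ⊗ₜ[R] (b ⊗ₜ[R] c) := by
              simp [haHdef]
            have hsw : swH ((a ⊗ₜ[R] b) ⊗ₜ[R] c) = (b ⊗ₜ[R] a) ⊗ₜ[R] c := by
              rw [hswH_tmul]
              simp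
            have hassoc2 : aH ((b ⊗ₜ[R] a) ⊗ₜ[R] c) = b ⊗ₜ[R] (a ⊗ₜ[R] c) := by
              simp [haHdef]
            rw [hsw, hassoc, hassoc2]
            simp only [hT'def, hTdef, hσLLdef, hσdef, hB2'def, hB2def,
              pairAct_tmul_apply, LinearMap.comp_apply, TensorProduct.map_tmul,
              TensorProduct.lift.tmul, LinearMap.id_apply]
            simp [lieBil, hβlie]
  -- O4a : rewriting the braiding term through T
  have O4a : ∀ ζ : H ⊗[R] H,
      (TensorProduct.assoc R L L M) ((legAct ρL ρL ζ (y ⊗ₜ[R] x)) ⊗ₜ[R] m) =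
        T (aH (ζ ⊗ₜ[R] (1 : H))) (y ⊗ₜ[R] (x ⊗ₜ[R] m)) := by
    intro ζ
    induction ζ using TensorProduct.induction_on with
    | zero =>
        simp
    | add u v hu hv =>
        simp only [map_add, LinearMap.add_apply, TensorProduct.add_tmul, map_add, hu, hv]
    | tmul a b =>
        rw [legAct_eq_pairAct]
        have hassoc : aH ((a ⊗ₜ[R] b) ⊗ₜ[R] (1 : H)) = a ⊗ₜ[R] (b ⊗ₜ[R] (1 : H)) := by
          simp [haHdef]
        rw [hassoc]
        simp only [hσLLdef, hTdef, hσdef, pairAct_tmul_apply, TensorProduct.assoc_tmul,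
          map_one, Module.End.one_apply]
  -- element identities
  have hA12 : ((F ⊗ₜ[R] (1 : H)) * comulTensorId R H F) *
      (comulTensorId R H Finv * (Finv ⊗ₜ[R] (1 : H))) = 1 := by
    have hmid : comulTensorId R H F * comulTensorId R H Finv = 1 := by
      rw [← map_mul, hF1, map_one]
    rw [mul_assoc, ← mul_assoc (comulTensorId R H F), hmid, one_mul,
      Algebra.TensorProduct.tmul_mul_tmul, hF1, one_mul, ← Algebra.TensorProduct.one_def]
  have hBbB1 : (idTensorComul R H Finv * ((1 : H) ⊗ₜ[R] Finv)) *
      (((1 : H) ⊗ₜ[R] F) * idTensorComul R H F) = 1 := by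
    have hmid : ((1 : H) ⊗ₜ[R] Finv) * ((1 : H) ⊗ₜ[R] F) = 1 := by
      rw [Algebra.TensorProduct.tmul_mul_tmul, hF2, one_mul, ← Algebra.TensorProduct.one_def]
    rw [mul_assoc, ← mul_assoc ((1 : H) ⊗ₜ[R] Finv), hmid, one_mul, ← map_mul, hF2, map_one]
  have hF3' : aH ((F ⊗ₜ[R] (1 : H)) * comulTensorId R H F) =
      ((1 : H) ⊗ₜ[R] F) * idTensorComul R H F := hF3
  -- E1 : inverse cocycle condition
  have E1 : aH (comulTensorId R H Finv * (Finv ⊗ₜ[R] (1 : H))) =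
      idTensorComul R H Finv * ((1 : H) ⊗ₜ[R] Finv) := by
    calc aH (comulTensorId R H Finv * (Finv ⊗ₜ[R] (1 : H)))
        = ((idTensorComul R H Finv * ((1 : H) ⊗ₜ[R] Finv)) *
            (((1 : H) ⊗ₜ[R] F) * idTensorComul R H F)) *
            aH (comulTensorId R H Finv * (Finv ⊗ₜ[R] (1 : H))) := by
          rw [hBbB1, one_mul]
      _ = (idTensorComul R H Finv * ((1 : H) ⊗ₜ[R] Finv)) *
            (aH ((F ⊗ₜ[R] (1 : H)) * comulTensorId R H F) *
              aH (comulTensorId R H Finv * (Finv ⊗ₜ[R] (1 : H)))) := by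
          rw [hF3', mul_assoc]
      _ = idTensorComul R H Finv * ((1 : H) ⊗ₜ[R] Finv) := by
          rw [← map_mul, hA12, map_one, mul_one]
  -- the flipped R-matrix
  have htauR : (Algebra.TensorProduct.comm R H H) (Rmat R F Finv) =
      F * (Algebra.TensorProduct.comm R H H) Finv := by
    rw [Rmat, map_mul, comm_comm_apply]
  -- cocommutativity : the swap fixes (Δ ⊗ id)-images
  have hswcTI0 : ∀ ξ : H ⊗[R] H, swH (comulTensorId R H ξ) = comulTensorId R H ξ := by
    intro ξ
    induction ξ using TensorProduct.induction_on with
    | zero => simp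
    | tmul a b =>
        rw [comulTensorId]
        simp only [Algebra.TensorProduct.map_tmul, AlgHom.coe_id, id_eq,
          Bialgebra.comulAlgHom_apply]
        rw [hswH_tmul, hcc]
    | add u v hu hv => simp only [map_add, hu, hv]
  have hswcTI : swH (comulTensorId R H Finv) = comulTensorId R H Finv := hswcTI0 Finv
  have hswG' : swH (comulTensorId R H Finv * (Finv ⊗ₜ[R] (1 : H))) =
      comulTensorId R H Finv *
        ((Algebra.TensorProduct.comm R H H Finv) ⊗ₜ[R] (1 : H)) := by
    rw [map_mul, hswcTI, hswH_tmul]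
  -- E2
  have E2 : (idTensorComul R H Finv * ((1 : H) ⊗ₜ[R] Finv)) *
      aH (((Algebra.TensorProduct.comm R H H) (Rmat R F Finv)) ⊗ₜ[R] (1 : H)) =
        aH (comulTensorId R H Finv *
          ((Algebra.TensorProduct.comm R H H Finv) ⊗ₜ[R] (1 : H))) := by
    rw [htauR]
    have hsplit : (F * (Algebra.TensorProduct.comm R H H) Finv) ⊗ₜ[R] (1 : H) =
        (F ⊗ₜ[R] (1 : H)) * ((Algebra.TensorProduct.comm R H H Finv) ⊗ₜ[R] (1 : H)) := by
      rw [Algebra.TensorProduct.tmul_mul_tmul, mul_one]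
    rw [hsplit, ← E1, ← map_mul]
    congr 1
    have hmid2 : (Finv ⊗ₜ[R] (1 : H)) * (F ⊗ₜ[R] (1 : H)) = 1 := by
      rw [Algebra.TensorProduct.tmul_mul_tmul, hF2, one_mul,
        ← Algebra.TensorProduct.one_def]
    rw [mul_assoc, ← mul_assoc (Finv ⊗ₜ[R] (1 : H)), hmid2, one_mul]
  -- assemble everything
  have e1 := LinearMap.congr_fun (O1 Finv Finv) (x ⊗ₜ[R] (y ⊗ₜ[R] m))
  simp only [LinearMap.comp_apply, TensorProduct.map_tmul, LinearMap.id_apply] at e1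
  have e2 := LinearMap.congr_fun (O1 Finv Finv)
    ((TensorProduct.assoc R L L M)
      ((legAct ρL ρL ((Algebra.TensorProduct.comm R H H) (Rmat R F Finv))
        (y ⊗ₜ[R] x)) ⊗ₜ[R] m))
  rw [e1, e2]
  rw [O4a ((Algebra.TensorProduct.comm R H H) (Rmat R F Finv))]
  rw [LinearMap.comp_apply]
  rw [O2 Finv Finv, O3 (comulTensorId R H Finv * (Finv ⊗ₜ[R] (1 : H)))]
  rw [E1, hswG', ← E2]
  rw [map_mul T (idTensorComul R H Finv * ((1 : H) ⊗ₜ[R] Finv))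
    (aH (((Algebra.TensorProduct.comm R H H) (Rmat R F Finv)) ⊗ₜ[R] (1 : H)))]
  rw [Module.End.mul_apply]
  rfl
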